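/- Under the signal strength condition |α_j| ≥ |β_j| + δ for all j in the true support S (with |S| = s), Gaussian noise column projections γ_j, γ̃_j ~ N(0, σ²/m), and threshold T < δ, the probability that every j ∈ S satisfies W_j ≥ T (i.e., S ⊆ Ŝ) is at least 1 − 4s·exp(−m·(δ−T)²/(8σ²)). -/

import Mathlib

open MeasureTheory ProbabilityTheory Real

lemma gauss_tail_aux (v : NNReal) (hv : v ≠ 0) (t c : ℝ) (hc : c ^ 2 = t ^ 2) (s : Set ℝ)
    (hkey : ∀ x ∈ s, t ^ 2 ≤ c * x) :
    gaussianReal 0 v s ≤ ENNReal.ofReal (Real.exp (-t ^ 2 / (2 * v))) := by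
  have hvpos : (0:ℝ) < (v:ℝ) := by
    rcases lt_or_eq_of_le v.coe_nonneg with h | h
    · exact h
    · exact absurd (by exact_mod_cast h.symm) hv
  set E : ℝ := Real.exp (-t ^ 2 / (2 * v)) with hE
  have hEpos : 0 < E := Real.exp_pos _
  have hpt : ∀ x ∈ s, gaussianPDFReal 0 v x ≤ E * gaussianPDFReal c v x := by
    intro x hx
    rw [gaussianPDFReal_def, gaussianPDFReal_def]
    have h2v : (0:ℝ) < 2 * v := by positivity
    have hexp : Real.exp (-(x - 0) ^ 2 / (2 * v)) ≤ E * Real.exp (-(x - c) ^ 2 / (2 * v)) := by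
      rw [hE, ← Real.exp_add, Real.exp_le_exp, ← add_div, div_le_div_iff_of_pos_right h2v]
      nlinarith [hkey x hx]
    rw [mul_left_comm]
    exact mul_le_mul_of_nonneg_left hexp (by positivity)
  calc gaussianReal 0 v s = ∫⁻ x in s, gaussianPDF 0 v x := gaussianReal_apply 0 hv s
    _ ≤ ∫⁻ x in s, ENNReal.ofReal E * gaussianPDF c v x := by
        refine setLIntegral_mono ((measurable_gaussianPDF c v).const_mul _) ?_
        intro x hx
        rw [gaussianPDF_def, gaussianPDF_def, ← ENNReal.ofReal_mul hEpos.le]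
        exact ENNReal.ofReal_le_ofReal (hpt x hx)
    _ ≤ ∫⁻ x, ENNReal.ofReal E * gaussianPDF c v x :=
        setLIntegral_le_lintegral _ _
    _ = ENNReal.ofReal E * ∫⁻ x, gaussianPDF c v x :=
        lintegral_const_mul _ (measurable_gaussianPDF c v)
    _ = ENNReal.ofReal E := by rw [lintegral_gaussianPDF_eq_one c hv, mul_one]

lemma gauss_abs_tail (v : NNReal) (hv : v ≠ 0) (t : ℝ) (ht : 0 ≤ t) :
    gaussianReal 0 v {x | t ≤ |x|} ≤ 2 * ENNReal.ofReal (Real.exp (-t ^ 2 / (2 * v))) := by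
  have hsub : {x : ℝ | t ≤ |x|} ⊆ {x | t ≤ x} ∪ {x | x ≤ -t} := by
    intro x hx
    rcases abs_cases x with ⟨h1, _⟩ | ⟨h1, _⟩
    · left; simpa [h1] using hx
    · right; simp only [Set.mem_setOf_eq] at hx ⊢; linarith [h1 ▸ hx]
  calc gaussianReal 0 v {x | t ≤ |x|}
      ≤ gaussianReal 0 v ({x | t ≤ x} ∪ {x | x ≤ -t}) := measure_mono hsub
    _ ≤ gaussianReal 0 v {x | t ≤ x} + gaussianReal 0 v {x | x ≤ -t} := measure_union_le _ _
    _ ≤ ENNReal.ofReal (Real.exp (-t ^ 2 / (2 * v))) + ENNReal.ofReal (Real.exp (-t ^ 2 / (2 * v))) := by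
        gcongr
        · exact gauss_tail_aux v hv t t rfl _ (fun x hx => by nlinarith [Set.mem_setOf_eq ▸ hx])
        · exact gauss_tail_aux v hv t (-t) (by ring) _ (fun x hx => by
            have : x ≤ -t := hx
            nlinarith)
    _ = 2 * ENNReal.ofReal (Real.exp (-t ^ 2 / (2 * v))) := (two_mul _).symm

/-- Under the signal strength condition `|α_j| ≥ |β_j| + δ` on the true support `S`
(`|S| = s`), Gaussian noise projections `γ_j, γ̃_j ~ N(0, σ²/m)`, and threshold `T < δ`,
the probability that every `j ∈ S` satisfies `W_j ≥ T` (i.e. `S ⊆ Ŝ`) is at least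
`1 − 4s·exp(−m·(δ−T)²/(8σ²))`. -/
theorem support_inclusion_probability
    {Ω : Type*} [MeasurableSpace Ω] (P : Measure Ω) [IsProbabilityMeasure P]
    (σ : ℝ) (hσ : 0 < σ) (m n : ℕ) (hm : 0 < m)
    (S : Finset (Fin n)) (s : ℕ) (hs : S.card = s)
    (α β : Fin n → ℝ) (γ γt : Fin n → Ω → ℝ)
    (hγ : ∀ j, Measurable (γ j)) (hγt : ∀ j, Measurable (γt j))
    (hγlaw : ∀ j, Measure.map (γ j) P = gaussianReal 0 (Real.toNNReal (σ ^ 2 / m)))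
    (hγtlaw : ∀ j, Measure.map (γt j) P = gaussianReal 0 (Real.toNNReal (σ ^ 2 / m)))
    (W : Fin n → Ω → ℝ)
    (hW : ∀ j ω, W j ω = |α j + γ j ω| - |β j + γt j ω|)
    (δ T : ℝ) (hδ : 0 < δ) (hT : T < δ)
    (hsig : ∀ j ∈ S, |β j| + δ ≤ |α j|) :
    1 - 4 * s * Real.exp (-(m * (δ - T) ^ 2) / (8 * σ ^ 2)) ≤
      (P {ω | ∀ j ∈ S, T ≤ W j ω}).toReal := by
  have hmR : (0:ℝ) < (m:ℝ) := by exact_mod_cast hm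
  set v : NNReal := Real.toNNReal (σ ^ 2 / m) with hvdef
  have hvr : (v : ℝ) = σ ^ 2 / m := Real.coe_toNNReal _ (by positivity)
  have hv : v ≠ 0 := by
    intro h
    have : (v : ℝ) = 0 := by rw [h]; simp
    rw [hvr] at this
    have : (0:ℝ) < σ ^ 2 / m := by positivity
    linarith
  set t0 : ℝ := (δ - T) / 2 with ht0def
  have ht0 : 0 < t0 := by simp only [ht0def]; linarith
  set E : ℝ := Real.exp (-(m * (δ - T) ^ 2) / (8 * σ ^ 2)) with hEdef
  have hEpos : 0 < E := Real.exp_pos _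
  have hEeq : Real.exp (-t0 ^ 2 / (2 * v)) = E := by
    rw [hEdef, ht0def, hvr]
    congr 1
    field_simp
    ring
  -- measurability
  have hWm : ∀ j, Measurable (W j) := by
    intro j
    have : W j = fun ω => |α j + γ j ω| - |β j + γt j ω| := funext (hW j)
    rw [this]
    exact ((measurable_const.add (hγ j)).abs.sub ((measurable_const.add (hγt j)).abs))
  set G : Set Ω := {ω | ∀ j ∈ S, T ≤ W j ω} with hGdef
  have hG : MeasurableSet G := by
    have : G = ⋂ j ∈ S, {ω | T ≤ W j ω} := by ext ω; simp [hGdef]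
    rw [this]
    exact MeasurableSet.biInter (Set.to_countable _)
      (fun j _ => measurableSet_le measurable_const (hWm j))
  -- inclusion of the complement
  have hcompl : Gᶜ ⊆ ⋃ j ∈ S, ({ω | t0 ≤ |γ j ω|} ∪ {ω | t0 ≤ |γt j ω|}) := by
    intro ω hω
    simp only [hGdef, Set.mem_compl_iff, Set.mem_setOf_eq, not_forall] at hω
    obtain ⟨j, hj, hWj⟩ := hω
    push_neg at hWj
    refine Set.mem_biUnion hj ?_
    by_contra h
    simp only [Set.mem_union, Set.mem_setOf_eq, not_or, not_le] at h
    have h1 : |α j| - |γ j ω| ≤ |α j + γ j ω| := by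
      have := abs_sub_abs_le_abs_sub (α j) (-(γ j ω))
      simpa [sub_neg_eq_add] using this
    have h2 : |β j + γt j ω| ≤ |β j| + |γt j ω| := abs_add_le _ _
    have h3 := hsig j hj
    have h4 := hW j ω
    simp only [ht0def] at h
    linarith [h.1, h.2]
  -- gaussian tail for each coordinate
  have htail : ∀ (X : Ω → ℝ), Measurable X →
      Measure.map X P = gaussianReal 0 v → P {ω | t0 ≤ |X ω|} ≤ 2 * ENNReal.ofReal E := by
    intro X hXm hXlaw
    have hset : MeasurableSet {x : ℝ | t0 ≤ |x|} :=
      measurableSet_le measurable_const measurable_abs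
    have : P {ω | t0 ≤ |X ω|} = Measure.map X P {x | t0 ≤ |x|} := by
      rw [Measure.map_apply hXm hset]
      rfl
    rw [this, hXlaw, ← hEeq]
    exact gauss_abs_tail v hv t0 ht0.le
  -- union bound
  have hbound : P Gᶜ ≤ ENNReal.ofReal (4 * s * E) := by
    calc P Gᶜ ≤ P (⋃ j ∈ S, ({ω | t0 ≤ |γ j ω|} ∪ {ω | t0 ≤ |γt j ω|})) :=
          measure_mono hcompl
      _ ≤ ∑ j ∈ S, P ({ω | t0 ≤ |γ j ω|} ∪ {ω | t0 ≤ |γt j ω|}) :=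
          measure_biUnion_finset_le S _
      _ ≤ ∑ j ∈ S, (2 * ENNReal.ofReal E + 2 * ENNReal.ofReal E) := by
          refine Finset.sum_le_sum fun j _ => ?_
          calc P ({ω | t0 ≤ |γ j ω|} ∪ {ω | t0 ≤ |γt j ω|})
              ≤ P {ω | t0 ≤ |γ j ω|} + P {ω | t0 ≤ |γt j ω|} := measure_union_le _ _
            _ ≤ 2 * ENNReal.ofReal E + 2 * ENNReal.ofReal E := by
                gcongr
                · exact htail _ (hγ j) (hγlaw j)
                · exact htail _ (hγt j) (hγtlaw j)
      _ = (S.card : ENNReal) * (2 * ENNReal.ofReal E + 2 * ENNReal.ofReal E) := by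
          rw [Finset.sum_const, nsmul_eq_mul]
      _ = ENNReal.ofReal (4 * s * E) := by
          rw [hs, ← ENNReal.ofReal_natCast s]
          rw [show (2 : ENNReal) = ENNReal.ofReal 2 by simp]
          rw [← ENNReal.ofReal_mul (by norm_num), ← ENNReal.ofReal_add (by positivity) (by positivity),
            ← ENNReal.ofReal_mul (by positivity)]
          congr 1
          ring
  -- conclude
  have hPGne : P Gᶜ ≠ ⊤ := (measure_lt_top P _).ne
  have h5 : (P Gᶜ).toReal ≤ 4 * s * E := by
    have := ENNReal.toReal_mono ENNReal.ofReal_ne_top hbound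
    rwa [ENNReal.toReal_ofReal (by positivity)] at this
  have h6 : (P Gᶜ).toReal = 1 - (P G).toReal := by
    rw [prob_compl_eq_one_sub hG, ENNReal.toReal_sub_of_le prob_le_one ENNReal.one_ne_top]
    simp
  linarith
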